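/- arXiv:0811.1729 — 2 statements merged into one kernel-verified Lean document; each statement's English description precedes it below -/
import Mathlib

section
/- Let $B$ be a standard Brownian motion. For all $\epsilon > 0$, almost surely there exists $n_0(\epsilon)$ such that for all $n \ge n_0$, $|B(n)| < (1+\epsilon)\sqrt{2 n \log\log n}$. -/
open MeasureTheory ProbabilityTheory
open Real
open scoped NNReal ENNReal

set_option linter.unusedSectionVars false
set_option linter.deprecated false
set_option linter.unusedVariables false


lemma gauss_map_neg (v : ℝ≥0) :
    Measure.map (fun x : ℝ => -x) (gaussianReal 0 v) = gaussianReal 0 v := by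
  have h := gaussianReal_map_const_mul (μ := 0) (v := v) (-1)
  have h2 : (⟨(-1:ℝ)^2, sq_nonneg _⟩ : ℝ≥0) = 1 := by ext; norm_num
  simp only [neg_one_mul, mul_zero, h2, one_mul] at h
  convert h using 2; ext; simp

lemma gauss_half_le_nonneg (v : ℝ≥0) :
    2⁻¹ ≤ gaussianReal 0 v {x | 0 ≤ x} := by
  have hsym : gaussianReal 0 v {x | x ≤ 0} = gaussianReal 0 v {x | 0 ≤ x} := by
    conv_lhs => rw [← gauss_map_neg v]
    rw [Measure.map_apply measurable_neg (by exact measurableSet_le measurable_id measurable_const)]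
    congr 1
    ext x
    simp
  have hcover : (1 : ℝ≥0∞) ≤ 2 * gaussianReal 0 v {x | 0 ≤ x} := by
    have hsub : (Set.univ : Set ℝ) ⊆ {x | x ≤ 0} ∪ {x | 0 ≤ x} := by
      intro x _; exact le_total x 0
    calc (1:ℝ≥0∞) = gaussianReal 0 v Set.univ := (measure_univ).symm
    _ ≤ gaussianReal 0 v ({x | x ≤ 0} ∪ {x | 0 ≤ x}) := measure_mono hsub
    _ ≤ gaussianReal 0 v {x | x ≤ 0} + gaussianReal 0 v {x | 0 ≤ x} := measure_union_le _ _
    _ = 2 * gaussianReal 0 v {x | 0 ≤ x} := by rw [hsym, two_mul]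
  calc (2:ℝ≥0∞)⁻¹ = 1 * 2⁻¹ := (one_mul _).symm
  _ ≤ (2 * gaussianReal 0 v {x | 0 ≤ x}) * 2⁻¹ := by gcongr
  _ = gaussianReal 0 v {x | 0 ≤ x} := by
      rw [mul_comm 2 _, mul_assoc, ENNReal.mul_inv_cancel two_ne_zero ENNReal.ofNat_ne_top, mul_one]

lemma gauss_half_le_nonpos (v : ℝ≥0) :
    2⁻¹ ≤ gaussianReal 0 v {x | x ≤ 0} := by
  have hsym : gaussianReal 0 v {x | x ≤ 0} = gaussianReal 0 v {x | 0 ≤ x} := by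
    conv_lhs => rw [← gauss_map_neg v]
    rw [Measure.map_apply measurable_neg (by exact measurableSet_le measurable_id measurable_const)]
    congr 1
    ext x
    simp
  rw [hsym]; exact gauss_half_le_nonneg v

lemma gauss_tail (v : ℝ≥0) (a : ℝ) (ha : 0 ≤ a) :
    gaussianReal 0 v {x | a ≤ x} ≤ ENNReal.ofReal (Real.exp (-(a^2) / (2*v))) := by
  have hs : MeasurableSet {x : ℝ | a ≤ x} := measurableSet_le measurable_const measurable_id
  by_cases hv : v = 0
  · subst hv
    rw [gaussianReal_zero_var, Measure.dirac_apply' _ hs]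
    rcases eq_or_lt_of_le ha with h0 | h0
    · have : (0:ℝ) ∈ {x : ℝ | a ≤ x} := by simp [← h0]
      rw [Set.indicator_of_mem this]
      simp [← h0]
    · have : (0:ℝ) ∉ {x : ℝ | a ≤ x} := by simp [h0]
      rw [Set.indicator_of_notMem this]
      simp
  · have hvpos : (0:ℝ) < (v:ℝ) := by positivity
    have hptwise : ∀ x ∈ {x : ℝ | a ≤ x},
        gaussianPDF 0 v x ≤ ENNReal.ofReal (rexp (-(a^2) / (2*v))) * gaussianPDF a v x := by
      intro x hx
      have hx' : a ≤ x := hx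
      rw [gaussianPDF, gaussianPDF, ← ENNReal.ofReal_mul (by positivity)]
      apply ENNReal.ofReal_le_ofReal
      rw [gaussianPDFReal, gaussianPDFReal]
      rw [show rexp (-(a^2) / (2*v)) * ((√(2 * π * v))⁻¹ * rexp (-(x - a)^2 / (2*(v:ℝ))))
          = (√(2 * π * (v:ℝ)))⁻¹ * (rexp (-(a^2) / (2*v)) * rexp (-(x - a)^2 / (2*v))) by ring]
      rw [← Real.exp_add]
      apply mul_le_mul_of_nonneg_left _ (by positivity)
      apply Real.exp_le_exp.mpr
      rw [← add_div, div_le_div_iff_of_pos_right (by positivity)]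
      nlinarith
    calc gaussianReal 0 v {x | a ≤ x}
        = ∫⁻ x in {x | a ≤ x}, gaussianPDF 0 v x := gaussianReal_apply 0 hv _
      _ ≤ ∫⁻ x in {x | a ≤ x}, ENNReal.ofReal (rexp (-(a^2) / (2*v))) * gaussianPDF a v x :=
          setLIntegral_mono (by exact (measurable_gaussianPDF a v).const_mul _) hptwise
      _ = ENNReal.ofReal (rexp (-(a^2) / (2*v))) * ∫⁻ x in {x | a ≤ x}, gaussianPDF a v x := by
          rw [lintegral_const_mul _ (measurable_gaussianPDF a v)]
      _ ≤ ENNReal.ofReal (rexp (-(a^2) / (2*v))) * ∫⁻ x, gaussianPDF a v x := by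
          gcongr
          exact Measure.restrict_le_self
      _ = ENNReal.ofReal (rexp (-(a^2) / (2*v))) := by
          rw [lintegral_gaussianPDF_eq_one a hv, mul_one]

lemma gauss_tail_neg (v : ℝ≥0) (a : ℝ) (ha : 0 ≤ a) :
    gaussianReal 0 v {x | x ≤ -a} ≤ ENNReal.ofReal (Real.exp (-(a^2) / (2*v))) := by
  have h1 : {x : ℝ | x ≤ -a} = (fun x : ℝ => -x) ⁻¹' {x | a ≤ x} := by
    ext x; simp; constructor <;> intro h <;> linarith
  calc gaussianReal 0 v {x | x ≤ -a}
      = Measure.map (fun x : ℝ => -x) (gaussianReal 0 v) {x | a ≤ x} := by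
        have hset : MeasurableSet {x : ℝ | a ≤ x} := measurableSet_le measurable_const measurable_id
        rw [h1, ← Measure.map_apply measurable_neg hset]
    _ = gaussianReal 0 v {x | a ≤ x} := by rw [gauss_map_neg]
    _ ≤ _ := gauss_tail v a ha

section BM
variable {Ω : Type} [MeasurableSpace Ω] {P : Measure Ω} [IsProbabilityMeasure P]
  {B : ℝ → Ω → ℝ}

/-- Telescoping: `B n` is the sum of unit increments. -/
lemma bm_telescope (hB0 : ∀ ω, B 0 ω = 0) (n : ℕ) (ω : Ω) :
    ∑ i ∈ Finset.range n, (B (i+1 : ℕ) ω - B (i : ℕ) ω) = B (n : ℕ) ω := by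
  rw [Finset.sum_range_sub (fun i => B (i : ℕ) ω)]
  simp [hB0 ω]

/-- The head vector `(B 0, ..., B j)` is independent of the tail increment `B N - B j`. -/
lemma bm_head_tail_indep (hmeas : ∀ t, Measurable (B t)) (hB0 : ∀ ω, B 0 ω = 0)
    (hindep : ∀ (m : ℕ) (t : Fin (m + 1) → ℝ), (∀ i, 0 ≤ t i) → Monotone t →
      iIndepFun
        (fun i : Fin m => fun ω => B (t i.succ) ω - B (t i.castSucc) ω) P)
    (N j : ℕ) (hj : j < N) (s : Set (ℕ → ℝ)) (hs : MeasurableSet s)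
    (t : Set ℝ) (ht : MeasurableSet t) :
    P ({ω | (fun i : ℕ => if i ≤ j then B (i:ℕ) ω else 0) ∈ s} ∩
        {ω | (B (N:ℕ) ω - B (j:ℕ) ω) ∈ t})
      = P {ω | (fun i : ℕ => if i ≤ j then B (i:ℕ) ω else 0) ∈ s} *
        P {ω | (B (N:ℕ) ω - B (j:ℕ) ω) ∈ t} := by
  classical
  set tm : Fin (N+1) → ℝ := fun i => (i : ℕ) with htm
  set X : Fin N → Ω → ℝ := fun i ω => B (tm i.succ) ω - B (tm i.castSucc) ω with hXdef
  have hXY : ∀ (i : Fin N) (ω : Ω), X i ω = B ((i:ℕ)+1 : ℕ) ω - B ((i:ℕ) : ℕ) ω := by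
    intro i ω
    simp only [hXdef, htm]
    norm_num [Fin.val_succ, Fin.coe_castSucc]
  have hXmeas : ∀ i, Measurable (X i) := fun i => (hmeas _).sub (hmeas _)
  have hX : iIndepFun X P := by
    apply hindep N tm
    · intro i; simp [htm]
    · intro i k hik
      simp only [htm]
      exact Nat.cast_le.mpr hik
  set S : Finset (Fin N) := Finset.univ.filter (fun i => (i:ℕ) < j) with hS
  set T : Finset (Fin N) := Finset.univ.filter (fun i => ¬ (i:ℕ) < j) with hT
  have hST : Disjoint S T := by
    rw [hS, hT]
    exact Finset.disjoint_filter_filter_not Finset.univ Finset.univ _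
  have hfin := hX.indepFun_finset S T hST hXmeas
  -- head sums
  have hsum : ∀ n : ℕ, n ≤ j → ∀ ω,
      (∑ i : S, if ((i : Fin N):ℕ) < n then X i ω else 0) = B (n:ℕ) ω := by
    intro n hn ω
    rw [Finset.sum_coe_sort S (fun i => if (i:ℕ) < n then X i ω else 0), hS,
      Finset.sum_filter]
    have h1 : ∀ i : Fin N,
        (if (i:ℕ) < j then (if (i:ℕ) < n then X i ω else 0) else 0)
          = if (i:ℕ) < n then X i ω else 0 := by
      intro i
      by_cases hin : (i:ℕ) < n
      · simp [hin, lt_of_lt_of_le hin hn]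
      · by_cases hij : (i:ℕ) < j <;> simp [hin, hij]
    rw [Finset.sum_congr rfl (fun i _ => h1 i)]
    have h2 : ∀ i : Fin N, (if (i:ℕ) < n then X i ω else 0)
        = (fun k : ℕ => if k < n then B (k+1:ℕ) ω - B (k:ℕ) ω else 0) (i:ℕ) := by
      intro i
      by_cases hin : (i:ℕ) < n <;> simp [hin, hXY]
    rw [Finset.sum_congr rfl (fun i _ => h2 i),
      Fin.sum_univ_eq_sum_range (fun k : ℕ => if k < n then B (k+1:ℕ) ω - B (k:ℕ) ω else 0) N,
      ← Finset.sum_filter]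
    have h3 : (Finset.range N).filter (fun k => k < n) = Finset.range n := by
      ext k
      simp only [Finset.mem_filter, Finset.mem_range]
      constructor
      · exact fun h => h.2
      · exact fun h => ⟨lt_of_lt_of_le h (le_trans hn (le_of_lt hj)), h⟩
    rw [h3, bm_telescope hB0]
  -- tail sum
  have hsumT : ∀ ω, (∑ i : T, X i ω) = B (N:ℕ) ω - B (j:ℕ) ω := by
    intro ω
    rw [Finset.sum_coe_sort T (fun i => X i ω), hT]
    have hsplit := Finset.sum_filter_add_sum_filter_not Finset.univ
      (fun i : Fin N => (i:ℕ) < j) (fun i => X i ω)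
    have htot : ∑ i : Fin N, X i ω = B (N:ℕ) ω := by
      have := Fin.sum_univ_eq_sum_range (fun k : ℕ => B (k+1:ℕ) ω - B (k:ℕ) ω) N
      rw [Finset.sum_congr rfl (fun i _ => hXY i ω), this, bm_telescope hB0]
    have hhead : ∑ i ∈ Finset.univ.filter (fun i : Fin N => (i:ℕ) < j), X i ω
        = B (j:ℕ) ω := by
      have := hsum j le_rfl ω
      rw [Finset.sum_coe_sort S (fun i => if (i:ℕ) < j then X i ω else 0), hS,
        Finset.sum_filter] at this
      rw [Finset.sum_filter, ← this]
      apply Finset.sum_congr rfl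
      intro i _
      by_cases hij : (i:ℕ) < j <;> simp [hij]
    rw [htot, hhead] at hsplit
    linarith
  -- express events as preimages
  set φ : (S → ℝ) → (ℕ → ℝ) :=
    fun v n => if n ≤ j then (∑ i : S, if ((i : Fin N):ℕ) < n then v i else 0) else 0 with hφ
  have hφmeas : Measurable φ := by
    apply measurable_pi_lambda
    intro n
    by_cases hn : n ≤ j
    · simp only [hφ, if_pos hn]
      apply Finset.measurable_sum
      intro i _
      by_cases hin : ((i : Fin N):ℕ) < n
      · simpa only [if_pos hin] using measurable_pi_apply i
      · simpa only [if_neg hin] using measurable_const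
    · simp only [hφ, if_neg hn]
      exact measurable_const
  set ψ : (T → ℝ) → ℝ := fun v => ∑ i : T, v i with hψ
  have hψmeas : Measurable ψ := by
    apply Finset.measurable_sum
    exact fun i _ => measurable_pi_apply i
  have hhead_eq : {ω | (fun i : ℕ => if i ≤ j then B (i:ℕ) ω else 0) ∈ s}
      = (fun ω (i : S) => X i ω) ⁻¹' (φ ⁻¹' s) := by
    ext ω
    simp only [Set.mem_setOf_eq, Set.mem_preimage]
    have : (fun i : ℕ => if i ≤ j then B (i:ℕ) ω else 0) = φ (fun i : S => X i ω) := by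
      funext n
      by_cases hn : n ≤ j
      · simp only [hφ, if_pos hn]
        exact (hsum n hn ω).symm
      · simp only [hφ, if_neg hn]
    rw [this]
  have htail_eq : {ω | (B (N:ℕ) ω - B (j:ℕ) ω) ∈ t}
      = (fun ω (i : T) => X i ω) ⁻¹' (ψ ⁻¹' t) := by
    ext ω
    simp only [Set.mem_setOf_eq, Set.mem_preimage]
    rw [show (ψ fun i : T => X i ω) = B (N:ℕ) ω - B (j:ℕ) ω from hsumT ω]
  rw [hhead_eq, htail_eq]
  exact hfin.measure_inter_preimage_eq_mul _ _ (hφmeas hs) (hψmeas ht)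


lemma bm_map_eq (hmeas : ∀ t, Measurable (B t)) (hB0 : ∀ ω, B 0 ω = 0)
    (hgauss : ∀ s t : ℝ, 0 ≤ s → s ≤ t →
      Measure.map (fun ω => B t ω - B s ω) P = gaussianReal 0 (Real.toNNReal (t - s)))
    (t : ℝ) (ht : 0 ≤ t) :
    Measure.map (B t) P = gaussianReal 0 (Real.toNNReal t) := by
  have h := hgauss 0 t le_rfl ht
  have he : (fun ω => B t ω - B 0 ω) = B t := by
    funext ω; rw [hB0 ω, sub_zero]
  rw [he, sub_zero] at h
  exact h

lemma bm_half_nonneg (hmeas : ∀ t, Measurable (B t))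
    (hgauss : ∀ s t : ℝ, 0 ≤ s → s ≤ t →
      Measure.map (fun ω => B t ω - B s ω) P = gaussianReal 0 (Real.toNNReal (t - s)))
    (s t : ℝ) (hs : 0 ≤ s) (hst : s ≤ t) :
    2⁻¹ ≤ P {ω | 0 ≤ B t ω - B s ω} := by
  have hset : MeasurableSet {x : ℝ | 0 ≤ x} := measurableSet_le measurable_const measurable_id
  have : P {ω | 0 ≤ B t ω - B s ω}
      = Measure.map (fun ω => B t ω - B s ω) P {x | 0 ≤ x} := by
    rw [Measure.map_apply (f := fun ω => B t ω - B s ω) ((hmeas t).sub (hmeas s)) hset]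
    rfl
  rw [this, hgauss s t hs hst]
  exact gauss_half_le_nonneg _

lemma bm_half_nonpos (hmeas : ∀ t, Measurable (B t))
    (hgauss : ∀ s t : ℝ, 0 ≤ s → s ≤ t →
      Measure.map (fun ω => B t ω - B s ω) P = gaussianReal 0 (Real.toNNReal (t - s)))
    (s t : ℝ) (hs : 0 ≤ s) (hst : s ≤ t) :
    2⁻¹ ≤ P {ω | B t ω - B s ω ≤ 0} := by
  have hset : MeasurableSet {x : ℝ | x ≤ 0} := measurableSet_le measurable_id measurable_const
  have : P {ω | B t ω - B s ω ≤ 0}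
      = Measure.map (fun ω => B t ω - B s ω) P {x | x ≤ 0} := by
    rw [Measure.map_apply (f := fun ω => B t ω - B s ω) ((hmeas t).sub (hmeas s)) hset]
    rfl
  rw [this, hgauss s t hs hst]
  exact gauss_half_le_nonpos _

lemma bm_tail (hmeas : ∀ t, Measurable (B t)) (hB0 : ∀ ω, B 0 ω = 0)
    (hgauss : ∀ s t : ℝ, 0 ≤ s → s ≤ t →
      Measure.map (fun ω => B t ω - B s ω) P = gaussianReal 0 (Real.toNNReal (t - s)))
    (t : ℝ) (ht : 0 ≤ t) (a : ℝ) (ha : 0 ≤ a) :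
    P {ω | a ≤ B t ω} ≤ ENNReal.ofReal (Real.exp (-(a^2) / (2*t))) := by
  have hset : MeasurableSet {x : ℝ | a ≤ x} := measurableSet_le measurable_const measurable_id
  have h1 : P {ω | a ≤ B t ω} = Measure.map (B t) P {x | a ≤ x} := by
    rw [Measure.map_apply (hmeas t) hset]; rfl
  rw [h1, bm_map_eq hmeas hB0 hgauss t ht]
  have h2 := gauss_tail (Real.toNNReal t) a ha
  rwa [Real.coe_toNNReal t ht] at h2

lemma bm_tail_neg (hmeas : ∀ t, Measurable (B t)) (hB0 : ∀ ω, B 0 ω = 0)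
    (hgauss : ∀ s t : ℝ, 0 ≤ s → s ≤ t →
      Measure.map (fun ω => B t ω - B s ω) P = gaussianReal 0 (Real.toNNReal (t - s)))
    (t : ℝ) (ht : 0 ≤ t) (a : ℝ) (ha : 0 ≤ a) :
    P {ω | B t ω ≤ -a} ≤ ENNReal.ofReal (Real.exp (-(a^2) / (2*t))) := by
  have hset : MeasurableSet {x : ℝ | x ≤ -a} := measurableSet_le measurable_id measurable_const
  have h1 : P {ω | B t ω ≤ -a} = Measure.map (B t) P {x | x ≤ -a} := by
    rw [Measure.map_apply (hmeas t) hset]; rfl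
  rw [h1, bm_map_eq hmeas hB0 hgauss t ht]
  have h2 := gauss_tail_neg (Real.toNNReal t) a ha
  rwa [Real.coe_toNNReal t ht] at h2

lemma levy_max (hmeas : ∀ t, Measurable (B t)) (hB0 : ∀ ω, B 0 ω = 0)
    (hgauss : ∀ s t : ℝ, 0 ≤ s → s ≤ t →
      Measure.map (fun ω => B t ω - B s ω) P = gaussianReal 0 (Real.toNNReal (t - s)))
    (hindep : ∀ (m : ℕ) (t : Fin (m + 1) → ℝ), (∀ i, 0 ≤ t i) → Monotone t →
      iIndepFun
        (fun i : Fin m => fun ω => B (t i.succ) ω - B (t i.castSucc) ω) P)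
    (N : ℕ) (a : ℝ) (ha : 0 < a) :
    P {ω | ∃ j : ℕ, j ≤ N ∧ a ≤ |B (j:ℕ) ω|} ≤ 2 * P {ω | a ≤ |B (N:ℕ) ω|} := by
  classical
  set Gp : ℕ → Set Ω :=
    fun j => {ω | (∀ i, i < j → |B (i:ℕ) ω| < a) ∧ a ≤ B (j:ℕ) ω} with hGpdef
  set Gm : ℕ → Set Ω :=
    fun j => {ω | (∀ i, i < j → |B (i:ℕ) ω| < a) ∧ B (j:ℕ) ω ≤ -a} with hGmdef
  set Dp : ℕ → Set Ω := fun j => Gp j ∩ {ω | 0 ≤ B (N:ℕ) ω - B (j:ℕ) ω} with hDpdef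
  set Dm : ℕ → Set Ω := fun j => Gm j ∩ {ω | B (N:ℕ) ω - B (j:ℕ) ω ≤ 0} with hDmdef
  -- measurability
  have habs : ∀ j : ℕ, MeasurableSet {ω | ∀ i, i < j → |B (i:ℕ) ω| < a} := by
    intro j
    have he : {ω | ∀ i, i < j → |B (i:ℕ) ω| < a}
        = ⋂ i ∈ Set.Iio j, {ω | |B (i:ℕ) ω| < a} := by
      ext ω; simp
    rw [he]
    exact MeasurableSet.biInter (Set.to_countable _)
      (fun i _ => measurableSet_lt (hmeas _).abs measurable_const)
  have hmGp : ∀ j, MeasurableSet (Gp j) :=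
    fun j => (habs j).inter (measurableSet_le measurable_const (hmeas _))
  have hmGm : ∀ j, MeasurableSet (Gm j) :=
    fun j => (habs j).inter (measurableSet_le (hmeas _) measurable_const)
  have hmDp : ∀ j, MeasurableSet (Dp j) :=
    fun j => (hmGp j).inter
      (measurableSet_le measurable_const ((hmeas _).sub (hmeas _)))
  have hmDm : ∀ j, MeasurableSet (Dm j) :=
    fun j => (hmGm j).inter
      (measurableSet_le ((hmeas _).sub (hmeas _)) measurable_const)
  -- key inequalities
  have hkey_p : ∀ j, j ≤ N → P (Gp j) ≤ 2 * P (Dp j) := by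
    intro j hjN
    rcases eq_or_lt_of_le hjN with rfl | hjlt
    · have hDG : Dp j = Gp j := by
        have h0 : Dp j = Gp j ∩ {ω | 0 ≤ B (j:ℕ) ω - B (j:ℕ) ω} := rfl
        rw [h0]
        apply Set.inter_eq_left.mpr
        intro ω _
        simp
      rw [hDG]
      exact le_mul_of_one_le_left zero_le one_le_two
    · set sp : Set (ℕ → ℝ) := {v | (∀ i, i < j → |v i| < a) ∧ a ≤ v j} with hspdef
      have hsp : MeasurableSet sp := by
        have he : sp = (⋂ i ∈ Set.Iio j, {v : ℕ → ℝ | |v i| < a}) ∩ {v : ℕ → ℝ | a ≤ v j} := by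
          ext v; simp [hspdef]
        rw [he]
        exact (MeasurableSet.biInter (Set.to_countable _)
            (fun i _ => measurableSet_lt (measurable_pi_apply i).abs measurable_const)).inter
          (measurableSet_le measurable_const (measurable_pi_apply j))
      have hGp_eq : Gp j = {ω | (fun i : ℕ => if i ≤ j then B (i:ℕ) ω else 0) ∈ sp} := by
        ext ω
        simp only [hGpdef, hspdef, Set.mem_setOf_eq]
        constructor
        · rintro ⟨h1, h2⟩
          refine ⟨fun i hi => ?_, ?_⟩
          · rw [if_pos (le_of_lt hi)]; exact h1 i hi
          · rw [if_pos le_rfl]; exact h2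
        · rintro ⟨h1, h2⟩
          refine ⟨fun i hi => ?_, ?_⟩
          · have := h1 i hi; rwa [if_pos (le_of_lt hi)] at this
          · rwa [if_pos le_rfl] at h2
      have hind := bm_head_tail_indep hmeas hB0 hindep N j hjlt sp hsp
        {x | 0 ≤ x} (measurableSet_le measurable_const measurable_id)
      have hhalf : 2⁻¹ ≤ P {ω | (B (N:ℕ) ω - B (j:ℕ) ω) ∈ {x : ℝ | 0 ≤ x}} := by
        have := bm_half_nonneg hmeas hgauss (j:ℕ) (N:ℕ) (Nat.cast_nonneg j)
          (Nat.cast_le.mpr (le_of_lt hjlt))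
        exact this
      have hDp_eq : Dp j = {ω | (fun i : ℕ => if i ≤ j then B (i:ℕ) ω else 0) ∈ sp} ∩
          {ω | (B (N:ℕ) ω - B (j:ℕ) ω) ∈ {x : ℝ | 0 ≤ x}} := by
        have h0 : Dp j = Gp j ∩ {ω | 0 ≤ B (N:ℕ) ω - B (j:ℕ) ω} := rfl
        rw [h0, hGp_eq]
        rfl
      calc P (Gp j) = 2 * (P (Gp j) * 2⁻¹) := by
            rw [mul_comm (P (Gp j)) 2⁻¹, ← mul_assoc,
              ENNReal.mul_inv_cancel two_ne_zero ENNReal.ofNat_ne_top, one_mul]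
        _ ≤ 2 * (P (Gp j) * P {ω | (B (N:ℕ) ω - B (j:ℕ) ω) ∈ {x : ℝ | 0 ≤ x}}) := by
            gcongr
        _ = 2 * P (Dp j) := by rw [hGp_eq, ← hind, ← hDp_eq]
  have hkey_m : ∀ j, j ≤ N → P (Gm j) ≤ 2 * P (Dm j) := by
    intro j hjN
    rcases eq_or_lt_of_le hjN with rfl | hjlt
    · have hDG : Dm j = Gm j := by
        have h0 : Dm j = Gm j ∩ {ω | B (j:ℕ) ω - B (j:ℕ) ω ≤ 0} := rfl
        rw [h0]
        apply Set.inter_eq_left.mpr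
        intro ω _
        simp
      rw [hDG]
      exact le_mul_of_one_le_left zero_le one_le_two
    · set sm : Set (ℕ → ℝ) := {v | (∀ i, i < j → |v i| < a) ∧ v j ≤ -a} with hsmdef
      have hsm : MeasurableSet sm := by
        have he : sm = (⋂ i ∈ Set.Iio j, {v : ℕ → ℝ | |v i| < a}) ∩ {v : ℕ → ℝ | v j ≤ -a} := by
          ext v; simp [hsmdef]
        rw [he]
        exact (MeasurableSet.biInter (Set.to_countable _)
            (fun i _ => measurableSet_lt (measurable_pi_apply i).abs measurable_const)).inter
          (measurableSet_le (measurable_pi_apply j) measurable_const)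
      have hGm_eq : Gm j = {ω | (fun i : ℕ => if i ≤ j then B (i:ℕ) ω else 0) ∈ sm} := by
        ext ω
        simp only [hGmdef, hsmdef, Set.mem_setOf_eq]
        constructor
        · rintro ⟨h1, h2⟩
          refine ⟨fun i hi => ?_, ?_⟩
          · rw [if_pos (le_of_lt hi)]; exact h1 i hi
          · rw [if_pos le_rfl]; exact h2
        · rintro ⟨h1, h2⟩
          refine ⟨fun i hi => ?_, ?_⟩
          · have := h1 i hi; rwa [if_pos (le_of_lt hi)] at this
          · rwa [if_pos le_rfl] at h2
      have hind := bm_head_tail_indep hmeas hB0 hindep N j hjlt sm hsm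
        {x | x ≤ 0} (measurableSet_le measurable_id measurable_const)
      have hhalf : 2⁻¹ ≤ P {ω | (B (N:ℕ) ω - B (j:ℕ) ω) ∈ {x : ℝ | x ≤ 0}} := by
        have := bm_half_nonpos hmeas hgauss (j:ℕ) (N:ℕ) (Nat.cast_nonneg j)
          (Nat.cast_le.mpr (le_of_lt hjlt))
        exact this
      have hDm_eq : Dm j = {ω | (fun i : ℕ => if i ≤ j then B (i:ℕ) ω else 0) ∈ sm} ∩
          {ω | (B (N:ℕ) ω - B (j:ℕ) ω) ∈ {x : ℝ | x ≤ 0}} := by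
        have h0 : Dm j = Gm j ∩ {ω | B (N:ℕ) ω - B (j:ℕ) ω ≤ 0} := rfl
        rw [h0, hGm_eq]
        rfl
      calc P (Gm j) = 2 * (P (Gm j) * 2⁻¹) := by
            rw [mul_comm (P (Gm j)) 2⁻¹, ← mul_assoc,
              ENNReal.mul_inv_cancel two_ne_zero ENNReal.ofNat_ne_top, one_mul]
        _ ≤ 2 * (P (Gm j) * P {ω | (B (N:ℕ) ω - B (j:ℕ) ω) ∈ {x : ℝ | x ≤ 0}}) := by
            gcongr
        _ = 2 * P (Dm j) := by rw [hGm_eq, ← hind, ← hDm_eq]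
  -- covering by first passage events
  have hcover : {ω | ∃ j : ℕ, j ≤ N ∧ a ≤ |B (j:ℕ) ω|}
      ⊆ ⋃ j ∈ Finset.range (N+1), (Gp j ∪ Gm j) := by
    intro ω hω
    obtain ⟨j, hjN, hja⟩ := hω
    have hex : ∃ k : ℕ, a ≤ |B (k:ℕ) ω| := ⟨j, hja⟩
    have hk1 : a ≤ |B ((Nat.find hex : ℕ):ℕ) ω| := Nat.find_spec hex
    have hk2 : ∀ i, i < Nat.find hex → |B (i:ℕ) ω| < a :=
      fun i hi => lt_of_not_ge (Nat.find_min hex hi)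
    have hkN : Nat.find hex ≤ N := le_trans (Nat.find_min' hex hja) hjN
    have hmem : Nat.find hex ∈ Finset.range (N+1) := Finset.mem_range.mpr (Nat.lt_succ_of_le hkN)
    refine Set.mem_biUnion hmem ?_
    rcases le_abs.mp hk1 with h | h
    · exact Or.inl ⟨hk2, h⟩
    · exact Or.inr ⟨hk2, by linarith⟩
  -- disjointness
  have hdisjp : (↑(Finset.range (N+1)) : Set ℕ).PairwiseDisjoint Dp := by
    intro j _ j' _ hne
    apply Set.disjoint_left.mpr
    intro ω h1 h2
    rcases hne.lt_or_gt with hlt | hlt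
    · have hb := h2.1.1 j hlt
      have hc := h1.1.2
      have := le_abs_self (B (j:ℕ) ω)
      linarith
    · have hb := h1.1.1 j' hlt
      have hc := h2.1.2
      have := le_abs_self (B (j':ℕ) ω)
      linarith
  have hdisjm : (↑(Finset.range (N+1)) : Set ℕ).PairwiseDisjoint Dm := by
    intro j _ j' _ hne
    apply Set.disjoint_left.mpr
    intro ω h1 h2
    rcases hne.lt_or_gt with hlt | hlt
    · have hb := h2.1.1 j hlt
      have hc := h1.1.2
      have := neg_le_abs (B (j:ℕ) ω)
      linarith
    · have hb := h1.1.1 j' hlt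
      have hc := h2.1.2
      have := neg_le_abs (B (j':ℕ) ω)
      linarith
  have hsump : ∑ j ∈ Finset.range (N+1), P (Dp j)
      = P (⋃ j ∈ Finset.range (N+1), Dp j) :=
    (measure_biUnion_finset hdisjp (fun j _ => hmDp j)).symm
  have hsumm : ∑ j ∈ Finset.range (N+1), P (Dm j)
      = P (⋃ j ∈ Finset.range (N+1), Dm j) :=
    (measure_biUnion_finset hdisjm (fun j _ => hmDm j)).symm
  have hsubp : (⋃ j ∈ Finset.range (N+1), Dp j) ⊆ {ω | a ≤ B (N:ℕ) ω} := by
    refine Set.iUnion₂_subset fun j _ => ?_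
    intro ω hω
    have h1 := hω.1.2
    have h2 : 0 ≤ B (N:ℕ) ω - B (j:ℕ) ω := hω.2
    simp only [Set.mem_setOf_eq]
    linarith
  have hsubm : (⋃ j ∈ Finset.range (N+1), Dm j) ⊆ {ω | B (N:ℕ) ω ≤ -a} := by
    refine Set.iUnion₂_subset fun j _ => ?_
    intro ω hω
    have h1 := hω.1.2
    have h2 : B (N:ℕ) ω - B (j:ℕ) ω ≤ 0 := hω.2
    simp only [Set.mem_setOf_eq]
    linarith
  have habs_split : {ω | a ≤ B (N:ℕ) ω} ∪ {ω | B (N:ℕ) ω ≤ -a} = {ω | a ≤ |B (N:ℕ) ω|} := by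
    ext ω
    simp only [Set.mem_union, Set.mem_setOf_eq, le_abs]
    constructor
    · rintro (h | h)
      · exact Or.inl h
      · exact Or.inr (by linarith)
    · rintro (h | h)
      · exact Or.inl h
      · exact Or.inr (by linarith)
  have hdisjpm : Disjoint {ω | a ≤ B (N:ℕ) ω} {ω | B (N:ℕ) ω ≤ -a} := by
    apply Set.disjoint_left.mpr
    intro ω h1 h2
    simp only [Set.mem_setOf_eq] at h1 h2
    linarith
  calc P {ω | ∃ j : ℕ, j ≤ N ∧ a ≤ |B (j:ℕ) ω|}
      ≤ P (⋃ j ∈ Finset.range (N+1), (Gp j ∪ Gm j)) := measure_mono hcover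
    _ ≤ ∑ j ∈ Finset.range (N+1), P (Gp j ∪ Gm j) := measure_biUnion_finset_le _ _
    _ ≤ ∑ j ∈ Finset.range (N+1), (P (Gp j) + P (Gm j)) :=
        Finset.sum_le_sum fun j _ => measure_union_le _ _
    _ ≤ ∑ j ∈ Finset.range (N+1), (2 * P (Dp j) + 2 * P (Dm j)) :=
        Finset.sum_le_sum fun j hj => add_le_add
          (hkey_p j (Nat.lt_succ_iff.mp (Finset.mem_range.mp hj)))
          (hkey_m j (Nat.lt_succ_iff.mp (Finset.mem_range.mp hj)))
    _ = 2 * ((∑ j ∈ Finset.range (N+1), P (Dp j)) + ∑ j ∈ Finset.range (N+1), P (Dm j)) := by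
        rw [Finset.sum_add_distrib, ← Finset.mul_sum, ← Finset.mul_sum, mul_add]
    _ ≤ 2 * (P {ω | a ≤ B (N:ℕ) ω} + P {ω | B (N:ℕ) ω ≤ -a}) := by
        gcongr
        · rw [hsump]; exact measure_mono hsubp
        · rw [hsumm]; exact measure_mono hsubm
    _ = 2 * P ({ω | a ≤ B (N:ℕ) ω} ∪ {ω | B (N:ℕ) ω ≤ -a}) := by
        rw [measure_union hdisjpm (measurableSet_le (hmeas _) measurable_const)]
    _ = 2 * P {ω | a ≤ |B (N:ℕ) ω|} := by rw [habs_split]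
lemma bm_block (hmeas : ∀ t, Measurable (B t)) (hB0 : ∀ ω, B 0 ω = 0)
    (hgauss : ∀ s t : ℝ, 0 ≤ s → s ≤ t →
      Measure.map (fun ω => B t ω - B s ω) P = gaussianReal 0 (Real.toNNReal (t - s)))
    (hindep : ∀ (m : ℕ) (t : Fin (m + 1) → ℝ), (∀ i, 0 ≤ t i) → Monotone t →
      iIndepFun
        (fun i : Fin m => fun ω => B (t i.succ) ω - B (t i.castSucc) ω) P)
    (N : ℕ) (a : ℝ) (ha : 0 < a) :
    P {ω | ∃ j : ℕ, j ≤ N ∧ a ≤ |B (j:ℕ) ω|}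
      ≤ ENNReal.ofReal (4 * Real.exp (-(a^2) / (2*(N:ℝ)))) := by
  have hsplit : {ω : Ω | a ≤ |B (N:ℕ) ω|}
      ⊆ {ω | a ≤ B (N:ℕ) ω} ∪ {ω | B (N:ℕ) ω ≤ -a} := by
    intro ω hω
    have hω' : a ≤ |B (N:ℕ) ω| := hω
    rcases le_abs.mp hω' with h | h
    · exact Or.inl h
    · exact Or.inr (by simpa using by linarith)
  have h1 : P {ω | a ≤ |B (N:ℕ) ω|}
      ≤ ENNReal.ofReal (2 * Real.exp (-(a^2) / (2*(N:ℝ)))) := by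
    calc P {ω | a ≤ |B (N:ℕ) ω|}
        ≤ P ({ω | a ≤ B (N:ℕ) ω} ∪ {ω | B (N:ℕ) ω ≤ -a}) := measure_mono hsplit
      _ ≤ P {ω | a ≤ B (N:ℕ) ω} + P {ω | B (N:ℕ) ω ≤ -a} := measure_union_le _ _
      _ ≤ ENNReal.ofReal (Real.exp (-(a^2) / (2*(N:ℝ))))
          + ENNReal.ofReal (Real.exp (-(a^2) / (2*(N:ℝ)))) :=
          add_le_add (bm_tail hmeas hB0 hgauss (N:ℕ) (Nat.cast_nonneg N) a ha.le)
            (bm_tail_neg hmeas hB0 hgauss (N:ℕ) (Nat.cast_nonneg N) a ha.le)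
      _ = ENNReal.ofReal (2 * Real.exp (-(a^2) / (2*(N:ℝ)))) := by
          rw [← ENNReal.ofReal_add (Real.exp_nonneg _) (Real.exp_nonneg _)]
          congr 1; ring
  calc P {ω | ∃ j : ℕ, j ≤ N ∧ a ≤ |B (j:ℕ) ω|}
      ≤ 2 * P {ω | a ≤ |B (N:ℕ) ω|} := levy_max hmeas hB0 hgauss hindep N a ha
    _ ≤ 2 * ENNReal.ofReal (2 * Real.exp (-(a^2) / (2*(N:ℝ)))) := by gcongr
    _ = ENNReal.ofReal (4 * Real.exp (-(a^2) / (2*(N:ℝ)))) := by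
        rw [show (2:ℝ≥0∞) = ENNReal.ofReal 2 by simp,
          ← ENNReal.ofReal_mul (by norm_num)]
        congr 1; ring
end BM
/-- Law of the iterated logarithm bound: for a standard Brownian motion `B` (vanishing at
`0`, continuous paths, independent Gaussian increments `B(t) - B(s) ~ N(0, t-s)`),
for every `ε > 0`, almost surely there is `n₀` with
`|B(n)| < (1+ε)√(2 n log log n)` for all `n ≥ n₀`. -/
theorem stmt_11 (Ω : Type) [MeasurableSpace Ω] (P : Measure Ω) [IsProbabilityMeasure P]
    (B : ℝ → Ω → ℝ)
    (hmeas : ∀ t, Measurable (B t))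
    (hB0 : ∀ ω, B 0 ω = 0)
    (hcont : ∀ ω, Continuous fun t => B t ω)
    (hgauss : ∀ s t : ℝ, 0 ≤ s → s ≤ t →
      Measure.map (fun ω => B t ω - B s ω) P = gaussianReal 0 (Real.toNNReal (t - s)))
    (hindep : ∀ (m : ℕ) (t : Fin (m + 1) → ℝ), (∀ i, 0 ≤ t i) → Monotone t →
      iIndepFun
        (fun i : Fin m => fun ω => B (t i.succ) ω - B (t i.castSucc) ω) P)
    (ε : ℝ) (hε : 0 < ε) :
    ∀ᵐ ω ∂P, ∃ n0 : ℕ, ∀ n : ℕ, n0 ≤ n →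
      |B n ω| < (1 + ε) * Real.sqrt (2 * n * Real.log (Real.log n)) := by
  classical
  set q : ℝ := 1 + ε with hqdef
  have hq1 : 1 < q := by rw [hqdef]; linarith
  have hq0 : 0 < q := by linarith
  set nk : ℕ → ℕ := fun k => ⌈q ^ k⌉₊ with hnkdef
  have hnk : ∀ k, nk k = ⌈q ^ k⌉₊ := fun k => rfl
  have hnk_ge : ∀ k, q ^ k ≤ (nk k : ℝ) := fun k => Nat.le_ceil _
  have hnk_le : ∀ k, (nk k : ℝ) < q ^ k + 1 := fun k => Nat.ceil_lt_add_one (by positivity)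
  have hnk_mono : Monotone nk := by
    intro i j h
    exact Nat.ceil_le_ceil (pow_le_pow_right₀ hq1.le h)
  have hnk_pos : ∀ k, 1 ≤ nk k := by
    intro k
    have h1 : (1:ℝ) ≤ q ^ k := one_le_pow₀ hq1.le
    have := le_trans h1 (hnk_ge k)
    exact_mod_cast this
  set L : ℕ → ℝ := fun k => Real.log (Real.log (nk k)) with hLdef
  have hL : ∀ k, L k = Real.log (Real.log (nk k)) := fun k => rfl
  set ak : ℕ → ℝ := fun k => (1+ε) * Real.sqrt (2 * (nk k) * L k) with hakdef
  have hak : ∀ k, ak k = (1+ε) * Real.sqrt (2 * (nk k) * L k) := fun k => rfl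
  set A : ℕ → Set Ω := fun k => {ω | ∃ j : ℕ, j ≤ nk (k+1) ∧ ak k ≤ |B (j:ℕ) ω|} with hAdef
  have hA : ∀ k, A k = {ω | ∃ j : ℕ, j ≤ nk (k+1) ∧ ak k ≤ |B (j:ℕ) ω|} := fun k => rfl
  set r : ℝ := 1 + ε/2 with hrdef
  have hr1 : 1 < r := by rw [hrdef]; linarith
  set c₀ : ℝ := Real.log (Real.log q) with hc0def
  set C : ℝ := 4 * Real.exp (-r * c₀) with hCdef
  have hC0 : 0 ≤ C := by rw [hCdef]; positivity
  set g : ℕ → ℝ := fun k => C * (k:ℝ) ^ (-r) with hgdef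
  have hg : ∀ k, g k = C * (k:ℝ) ^ (-r) := fun k => rfl
  have htend : Filter.Tendsto (fun k : ℕ => q ^ k) Filter.atTop Filter.atTop :=
    tendsto_pow_atTop_atTop_of_one_lt hq1
  have hlogq : 0 < Real.log q := Real.log_pos hq1
  have hqr : 0 < q * (q - r) := by
    apply mul_pos hq0
    rw [hqdef, hrdef]; linarith
  -- eventual bound on P (A k)
  have hkey : ∀ᶠ k : ℕ in Filter.atTop, P (A k) ≤ ENNReal.ofReal (g k) := by
    have hev1 : ∀ᶠ k : ℕ in Filter.atTop, 1 - c₀ ≤ Real.log k :=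
      (Real.tendsto_log_atTop.comp tendsto_natCast_atTop_atTop).eventually_ge_atTop _
    have hev2 : ∀ᶠ k : ℕ in Filter.atTop, r / (q*(q - r)) ≤ q ^ k :=
      htend.eventually_ge_atTop _
    have hev3 : ∀ᶠ k : ℕ in Filter.atTop, 1 ≤ k := Filter.eventually_ge_atTop 1
    filter_upwards [hev1, hev2, hev3] with k h1 h2 h3
    have hk0 : (0:ℝ) < k := by exact_mod_cast h3
    have hc1 : 1 ≤ Real.log k + c₀ := by linarith
    have hln : (k:ℝ) * Real.log q ≤ Real.log (nk k) := by
      calc (k:ℝ) * Real.log q = Real.log (q ^ k) := by rw [Real.log_pow]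
      _ ≤ Real.log (nk k) := Real.log_le_log (by positivity) (hnk_ge k)
    have hLk : Real.log k + c₀ ≤ L k := by
      have hpos : 0 < (k:ℝ) * Real.log q := by positivity
      rw [hL]
      calc Real.log k + c₀ = Real.log ((k:ℝ) * Real.log q) := by
            rw [Real.log_mul (ne_of_gt hk0) (ne_of_gt hlogq)]
      _ ≤ Real.log (Real.log (nk k)) := Real.log_le_log hpos hln
    have hL1 : 1 ≤ L k := le_trans hc1 hLk
    have hnkr : (1:ℝ) ≤ nk k := by exact_mod_cast hnk_pos k
    have hnk1 : (1:ℝ) ≤ nk (k+1) := by exact_mod_cast hnk_pos (k+1)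
    have harg : 0 < 2 * (nk k : ℝ) * L k := by nlinarith
    have hapos : 0 < ak k := by
      rw [hak]
      apply mul_pos (by linarith)
      exact Real.sqrt_pos.mpr harg
    have hak2 : (ak k)^2 = (1+ε)^2 * (2 * (nk k : ℝ) * L k) := by
      rw [hak, mul_pow, Real.sq_sqrt harg.le]
    have hratio : r * (nk (k+1) : ℝ) ≤ (1+ε)^2 * (nk k : ℝ) := by
      have e1 : (nk (k+1):ℝ) < q^(k+1) + 1 := hnk_le (k+1)
      have e2 : q^k ≤ nk k := hnk_ge k
      have e4 : r ≤ q^k * (q*(q-r)) := (div_le_iff₀ hqr).mp h2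
      have e5 : q^(k+1) = q^k * q := pow_succ q k
      have hq2 : (1+ε)^2 = q^2 := by rw [hqdef]
      have hr0 : 0 < r := by linarith
      have e6 : r * (nk (k+1):ℝ) ≤ r * (q^(k+1)+1) :=
        mul_le_mul_of_nonneg_left e1.le hr0.le
      have e7 : r * (q^(k+1)+1) = r*q^k*q + r := by rw [e5]; ring
      have e8 : r*q^k*q + r ≤ r*q^k*q + q^k*(q*(q-r)) := by linarith
      have e9 : r*q^k*q + q^k*(q*(q-r)) = q^2 * q^k := by ring
      have e10 : q^2*q^k ≤ q^2 * (nk k:ℝ) := mul_le_mul_of_nonneg_left e2 (sq_nonneg q)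
      rw [hq2]
      linarith
    have hexp : r * (Real.log k + c₀) ≤ (ak k)^2 / (2 * (nk (k+1) : ℝ)) := by
      rw [le_div_iff₀ (by linarith), hak2]
      have t1 : r * (Real.log k + c₀) * (2 * (nk (k+1):ℝ)) = (r * (nk (k+1):ℝ)) * (2 * (Real.log k + c₀)) := by ring
      have t2 : (1+ε)^2 * (2 * (nk k : ℝ) * L k) = ((1+ε)^2 * (nk k:ℝ)) * (2 * L k) := by ring
      rw [t1, t2]
      apply mul_le_mul hratio (by linarith) (by linarith) (by positivity)
    have hblock := bm_block hmeas hB0 hgauss hindep (nk (k+1)) (ak k) hapos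
    calc P (A k) ≤ ENNReal.ofReal (4 * Real.exp (-((ak k)^2) / (2*((nk (k+1)):ℝ)))) := hblock
      _ ≤ ENNReal.ofReal (4 * Real.exp (-(r * (Real.log k + c₀)))) := by
          apply ENNReal.ofReal_le_ofReal
          have h5 : Real.exp (-((ak k)^2) / (2*((nk (k+1)):ℝ)))
              ≤ Real.exp (-(r * (Real.log k + c₀))) := by
            apply Real.exp_le_exp.mpr
            rw [neg_div]
            linarith
          linarith
      _ = ENNReal.ofReal (g k) := by
          rw [hg, hCdef, Real.rpow_def_of_pos hk0]
          congr 1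
          rw [mul_assoc, ← Real.exp_add]
          congr 2
          ring
  obtain ⟨K, hK⟩ := Filter.eventually_atTop.mp hkey
  -- Borel-Cantelli
  have hsum : (∑' k, P (A k)) ≠ ⊤ := by
    have hle : ∀ k, P (A k) ≤ (if k < K then (1:ℝ≥0∞) else 0) + ENNReal.ofReal (g k) := by
      intro k
      by_cases hk : k < K
      · simp only [if_pos hk]
        exact le_trans prob_le_one le_self_add
      · simp only [if_neg hk, zero_add]
        exact hK k (not_lt.mp hk)
    have h2 := ENNReal.tsum_le_tsum hle
    rw [ENNReal.tsum_add] at h2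
    have hfin1 : (∑' k : ℕ, (if k < K then (1:ℝ≥0∞) else 0)) = K := by
      rw [tsum_eq_sum (s := Finset.range K) (fun k hk => by
        simp only [Finset.mem_range, not_lt] at hk
        simp [Nat.not_lt.mpr hk])]
      rw [Finset.sum_congr rfl (fun k hk => if_pos (Finset.mem_range.mp hk))]
      simp
    have hg0 : ∀ k, 0 ≤ g k := fun k =>
      mul_nonneg hC0 (Real.rpow_nonneg (Nat.cast_nonneg k) _)
    have hgsum : Summable g := by
      apply Summable.mul_left C
      exact Real.summable_nat_rpow.mpr (by linarith)
    have hfin2 : (∑' k, ENNReal.ofReal (g k)) = ENNReal.ofReal (∑' k, g k) :=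
      (ENNReal.ofReal_tsum_of_nonneg hg0 hgsum).symm
    apply ne_top_of_le_ne_top _ h2
    rw [hfin1, hfin2]
    exact ENNReal.add_ne_top.mpr ⟨ENNReal.natCast_ne_top K, ENNReal.ofReal_ne_top⟩
  have hBC := MeasureTheory.ae_eventually_notMem hsum
  have hev16 : ∀ᶠ k : ℕ in Filter.atTop, (16:ℝ) ≤ q ^ k := htend.eventually_ge_atTop 16
  obtain ⟨K₂, hK₂⟩ := Filter.eventually_atTop.mp hev16
  filter_upwards [hBC] with ω hω
  obtain ⟨K₁, hK₁⟩ := Filter.eventually_atTop.mp hω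
  refine ⟨nk (max K₁ K₂), fun n hn => ?_⟩
  set K' := max K₁ K₂ with hK'def
  have hex : ∃ m : ℕ, n < nk m := by
    obtain ⟨m, hm⟩ := pow_unbounded_of_one_lt (n:ℝ) hq1
    refine ⟨m, ?_⟩
    have : (n:ℝ) < (nk m : ℝ) := lt_of_lt_of_le hm (hnk_ge m)
    exact_mod_cast this
  have hspec : n < nk (Nat.find hex) := Nat.find_spec hex
  have hKlt : K' < Nat.find hex := by
    by_contra hcon
    push_neg at hcon
    have h5 := hnk_mono hcon
    omega
  set k := Nat.find hex - 1 with hkdef2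
  have hkK : K' ≤ k := by omega
  have hk1 : nk k ≤ n := not_lt.mp (Nat.find_min hex (by omega))
  have hk2 : n < nk (k+1) := by
    rw [show k+1 = Nat.find hex from by omega]
    exact hspec
  have hnA : ω ∉ A k := hK₁ k (le_trans (le_max_left _ _) hkK)
  have hmain : |B (n:ℕ) ω| < ak k := by
    by_contra hcon
    exact hnA ⟨n, le_of_lt hk2, not_lt.mp hcon⟩
  -- monotonicity of the bound
  have h16K : (16:ℝ) ≤ (nk K' : ℝ) := le_trans (hK₂ K' (le_max_right _ _)) (hnk_ge K')
  have h16k : (16:ℝ) ≤ (nk k : ℝ) := by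
    have := hnk_mono hkK
    have : (nk K' : ℝ) ≤ (nk k : ℝ) := by exact_mod_cast this
    linarith
  have hnkn : (nk k : ℝ) ≤ (n:ℝ) := by exact_mod_cast hk1
  have h16n : (16:ℝ) ≤ (n:ℝ) := le_trans h16k hnkn
  have hlog1 : 1 ≤ Real.log (nk k) := by
    rw [← Real.log_exp 1]
    apply Real.log_le_log (Real.exp_pos 1)
    have := Real.exp_one_lt_d9
    linarith
  have hlog2 : Real.log (nk k) ≤ Real.log n := Real.log_le_log (by linarith) hnkn
  have hLL : L k ≤ Real.log (Real.log n) := by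
    rw [hL]
    exact Real.log_le_log (by linarith) hlog2
  have hL0' : 0 ≤ L k := by rw [hL]; exact Real.log_nonneg hlog1
  have hLn0 : 0 ≤ Real.log (Real.log n) := le_trans hL0' hLL
  have hsq : 2 * (nk k:ℝ) * L k ≤ 2 * (n:ℝ) * Real.log (Real.log n) := by nlinarith
  have hfinal : ak k ≤ (1+ε) * Real.sqrt (2 * (n:ℝ) * Real.log (Real.log n)) := by
    rw [hak]
    exact mul_le_mul_of_nonneg_left (Real.sqrt_le_sqrt hsq) (by linarith)
  calc |B (n:ℕ) ω| < ak k := hmain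
    _ ≤ _ := hfinal
end

section
/- Let $(h_n)$ be real numbers with $n^{-1}\sum_{i=1}^n h_i \to L$ for a finite limit $L$ (Cesàro convergence), and let $b_n$ be a monotone nondecreasing integer sequence with $b_n \to \infty$ and $b_n \le n$. Suppose additionally there exist constants $C, \sigma_h$, a Brownian path $B$ with the increment bound of Lemma 2, and $\alpha \in (0, 1/2)$ with $b_n^{-1} n^{2\alpha}\log n \to 0$, such that $|\sum_{i=1}^m h_i - m L - \sigma_h B(m)| \le C m^{2\alpha}\log m$ for all large $m$. Then $b_n^{-1}\sum_{i=n-b_n+1}^n h_i$ is bounded as $n \to \infty$; in fact $b_n^{-1}\sum_{i=n-b_n+1}^n h_i \le L + 2C b_n^{-1} n^{2\alpha}\log n + O((b_n^{-1}\log n)^{1/2})$ for large $n$. -/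
set_option maxHeartbeats 1000000


open Finset Filter

/-- Tail-average boundedness (Lemma 5): under Cesàro convergence of `(hᵢ)` to `L`, a
strong-invariance-principle bound with rate `m^{2α} log m` relative to a path `B`
satisfying the Brownian increment bound, and `bₙ⁻¹ n^{2α} log n → 0`, the averages
`bₙ⁻¹ ∑_{i=n-bₙ+1}^n hᵢ` stay bounded as `n → ∞`. -/
theorem stmt_15 (h : ℕ → ℝ) (L : ℝ)
    (hces : Tendsto (fun n : ℕ => (∑ i ∈ Finset.Icc 1 n, h i) / n) atTop (nhds L))
    (b : ℕ → ℕ) (hbmono : Monotone b) (hbtop : Tendsto b atTop atTop)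
    (hble : ∀ n, b n ≤ n)
    (C σh α : ℝ) (hα0 : 0 < α) (hα : α < 1 / 2)
    (B : ℝ → ℝ)
    (hratio : Tendsto (fun n : ℕ =>
      (n : ℝ) ^ (2 * α) * Real.log n / (b n : ℝ)) atTop (nhds 0))
    (hSIP : ∃ m0 : ℕ, ∀ m : ℕ, m0 ≤ m →
      |(∑ i ∈ Finset.Icc 1 m, h i) - (m : ℝ) * L - σh * B m| ≤
        C * (m : ℝ) ^ (2 * α) * Real.log m)
    (hincr : ∀ ε : ℝ, 0 < ε → ∃ n0 : ℕ, ∀ n : ℕ, n0 ≤ n →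
      |B n - B ((n : ℝ) - b n)| ≤
        (1 + ε) * Real.sqrt (2 * (b n : ℝ) *
          (Real.log ((n : ℝ) / b n) + Real.log (Real.log n)))) :
    ∃ M : ℝ, ∀ᶠ n : ℕ in atTop,
      |(∑ i ∈ Finset.Icc (n - b n + 1) n, h i) / (b n : ℝ)| ≤ M := by
  obtain ⟨m0, hm0⟩ := hSIP
  -- C is nonnegative
  have hC : 0 ≤ C := by
    set p : ℕ := max m0 2 with hp
    have h1 := hm0 p (le_max_left _ _)
    have h2 : (2:ℝ) ≤ (p : ℝ) := by exact_mod_cast le_max_right m0 2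
    have h3 : (0:ℝ) < (p : ℝ) ^ (2*α) := Real.rpow_pos_of_pos (by linarith) _
    have h4 : (0:ℝ) < Real.log (p : ℝ) := Real.log_pos (by linarith)
    nlinarith [abs_nonneg ((∑ i ∈ Finset.Icc 1 p, h i) - (p:ℝ) * L - σh * B p),
      mul_pos h3 h4]
  -- uniform bound for the small indices
  set K : ℝ := ∑ m ∈ Finset.range (m0+1),
      |(∑ i ∈ Finset.Icc 1 m, h i) - (m:ℝ) * L - σh * B m| with hKdef
  have hK0 : 0 ≤ K := Finset.sum_nonneg fun _ _ => abs_nonneg _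
  have hKb : ∀ m, m ≤ m0 → |(∑ i ∈ Finset.Icc 1 m, h i) - (m:ℝ) * L - σh * B m| ≤ K :=
    fun m hm => Finset.single_le_sum (f := fun m =>
      |(∑ i ∈ Finset.Icc 1 m, h i) - (m:ℝ) * L - σh * B m|)
      (fun _ _ => abs_nonneg _) (Finset.mem_range.mpr (Nat.lt_succ_of_le hm))
  obtain ⟨n1, hn1⟩ := hincr 1 one_pos
  have hδ : (0:ℝ) < (2*C+1)⁻¹ := by positivity
  have hev1 : ∀ᶠ n : ℕ in atTop,
      (n:ℝ)^(2*α) * Real.log n / (b n : ℝ) ≤ (2*C+1)⁻¹ :=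
    (hratio.eventually (gt_mem_nhds hδ)).mono fun n hn => le_of_lt hn
  refine ⟨K + 1 + |L| + 4*|σh|, ?_⟩
  filter_upwards [hev1, hbtop.eventually_ge_atTop 1, eventually_ge_atTop m0,
    eventually_ge_atTop 2, eventually_ge_atTop n1] with n hrat hb1 hnm0 hn2 hnn1
  set m := n - b n with hmdef
  have hbn : (1:ℝ) ≤ (b n : ℝ) := by exact_mod_cast hb1
  have hbpos : (0:ℝ) < (b n : ℝ) := by linarith
  have hn2R : (2:ℝ) ≤ (n:ℝ) := by exact_mod_cast hn2
  have hn1R : (1:ℝ) ≤ (n:ℝ) := by linarith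
  have hcast : ((m : ℕ) : ℝ) = (n:ℝ) - (b n : ℝ) := by
    rw [hmdef]; exact_mod_cast Nat.cast_sub (hble n)
  -- split the sum
  have hIcc : ∀ k : ℕ, Finset.Icc 1 k = Finset.Ioc 0 k := by
    intro k; ext x; simp only [Finset.mem_Icc, Finset.mem_Ioc]; omega
  have hIcc2 : Finset.Icc (m + 1) n = Finset.Ioc m n := by
    ext x; simp only [Finset.mem_Icc, Finset.mem_Ioc]; omega
  have hsplit : (∑ i ∈ Finset.Icc (m + 1) n, h i)
      = (∑ i ∈ Finset.Icc 1 n, h i) - (∑ i ∈ Finset.Icc 1 m, h i) := by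
    have := Finset.sum_Ioc_consecutive h (Nat.zero_le m) (Nat.sub_le n (b n))
    rw [hIcc2, hIcc, hIcc]
    linarith
  -- SIP bound at n
  have hA1 : |(∑ i ∈ Finset.Icc 1 n, h i) - (n:ℝ) * L - σh * B n|
      ≤ C * (n:ℝ)^(2*α) * Real.log n := hm0 n hnm0
  have hlogn0 : 0 ≤ Real.log (n:ℝ) := Real.log_nonneg hn1R
  have hrpown0 : (0:ℝ) ≤ (n:ℝ)^(2*α) := Real.rpow_nonneg (by linarith) _
  -- SIP (or crude) bound at m
  have hA2 : |(∑ i ∈ Finset.Icc 1 m, h i) - (m:ℝ) * L - σh * B m|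
      ≤ K + C * (n:ℝ)^(2*α) * Real.log n := by
    rcases le_or_gt m m0 with hc | hc
    · have := hKb m hc
      nlinarith [mul_nonneg (mul_nonneg hC hrpown0) hlogn0]
    · have hb := hm0 m (le_of_lt hc)
      have hm1 : 1 ≤ m := by omega
      have hm1R : (1:ℝ) ≤ (m:ℝ) := by exact_mod_cast hm1
      have hmn : (m:ℝ) ≤ (n:ℝ) := by exact_mod_cast Nat.sub_le n (b n)
      have h5 : (m:ℝ)^(2*α) ≤ (n:ℝ)^(2*α) :=
        Real.rpow_le_rpow (by linarith) hmn (by linarith)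
      have h6 : Real.log (m:ℝ) ≤ Real.log (n:ℝ) :=
        Real.log_le_log (by linarith) hmn
      have h7 : 0 ≤ Real.log (m:ℝ) := Real.log_nonneg hm1R
      have h8 : (0:ℝ) ≤ (m:ℝ)^(2*α) := Real.rpow_nonneg (by linarith) _
      have h9 : (m:ℝ)^(2*α) * Real.log (m:ℝ) ≤ (n:ℝ)^(2*α) * Real.log (n:ℝ) :=
        mul_le_mul h5 h6 h7 hrpown0
      have h10 : C * ((m:ℝ)^(2*α) * Real.log (m:ℝ)) ≤ C * ((n:ℝ)^(2*α) * Real.log (n:ℝ)) :=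
        mul_le_mul_of_nonneg_left h9 hC
      nlinarith [h10]
  -- increment bound
  have hloglebn : Real.log (n:ℝ) ≤ (b n : ℝ) := by
    have h1 : (n:ℝ)^(2*α) * Real.log n ≤ (2*C+1)⁻¹ * (b n : ℝ) :=
      (div_le_iff₀ hbpos).mp hrat
    have h2 : (2*C+1)⁻¹ ≤ 1 := by
      rw [inv_le_one_iff₀]; right; linarith
    have h3 : (1:ℝ) ≤ (n:ℝ)^(2*α) := Real.one_le_rpow hn1R (by linarith)
    nlinarith
  have hX1 : Real.log ((n:ℝ)/(b n : ℝ)) ≤ Real.log (n:ℝ) :=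
    Real.log_le_log (by positivity) (div_le_self (by linarith) hbn)
  have hX2 : Real.log (Real.log (n:ℝ)) ≤ Real.log (n:ℝ) := by
    have hlp : 0 < Real.log (n:ℝ) := Real.log_pos (by linarith)
    have := Real.log_le_sub_one_of_pos hlp
    linarith
  have hsq : Real.sqrt (2 * (b n : ℝ) *
      (Real.log ((n:ℝ)/(b n : ℝ)) + Real.log (Real.log (n:ℝ)))) ≤ 2 * (b n : ℝ) := by
    have h1 : 2 * (b n : ℝ) * (Real.log ((n:ℝ)/(b n : ℝ)) + Real.log (Real.log (n:ℝ)))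
        ≤ (2*(b n : ℝ))^2 := by nlinarith
    calc Real.sqrt (2 * (b n : ℝ) *
          (Real.log ((n:ℝ)/(b n : ℝ)) + Real.log (Real.log (n:ℝ))))
        ≤ Real.sqrt ((2*(b n : ℝ))^2) := Real.sqrt_le_sqrt h1
      _ = 2*(b n : ℝ) := Real.sqrt_sq (by positivity)
  have hBinc : |B (n:ℝ) - B ((m:ℕ):ℝ)| ≤ 4 * (b n : ℝ) := by
    rw [hcast]
    calc |B (n:ℝ) - B ((n:ℝ) - (b n : ℝ))|
        ≤ (1+1) * Real.sqrt (2 * (b n : ℝ) *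
            (Real.log ((n:ℝ)/(b n : ℝ)) + Real.log (Real.log (n:ℝ)))) := hn1 n hnn1
      _ ≤ (1+1) * (2 * (b n : ℝ)) := by linarith
      _ = 4 * (b n : ℝ) := by ring
  -- main estimate
  rw [abs_div, abs_of_pos hbpos, div_le_iff₀ hbpos]
  have edec : (∑ i ∈ Finset.Icc (m + 1) n, h i)
      = ((∑ i ∈ Finset.Icc 1 n, h i) - (n:ℝ) * L - σh * B n)
        - ((∑ i ∈ Finset.Icc 1 m, h i) - (m:ℝ) * L - σh * B m)
        + (b n : ℝ) * L + σh * (B n - B ((m:ℕ):ℝ)) := by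
    rw [hsplit, hcast]; ring
  have tri : ∀ x y z w : ℝ, |x - y + z + w| ≤ |x| + |y| + |z| + |w| := by
    intro x y z w
    calc |x - y + z + w| ≤ |x - y + z| + |w| := abs_add_le _ _
      _ ≤ (|x - y| + |z|) + |w| := add_le_add_left (abs_add_le _ _) _
      _ ≤ ((|x| + |y|) + |z|) + |w| :=
          add_le_add_left (add_le_add_left (abs_sub _ _) _) _
  have key : |∑ i ∈ Finset.Icc (m + 1) n, h i|
      ≤ C * (n:ℝ)^(2*α) * Real.log n + (K + C * (n:ℝ)^(2*α) * Real.log n)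
        + (b n : ℝ) * |L| + |σh| * (4 * (b n : ℝ)) := by
    rw [edec]
    refine (tri _ _ _ _).trans ?_
    have t2 : |(b n : ℝ) * L| = (b n : ℝ) * |L| := by
      rw [abs_mul, abs_of_pos hbpos]
    have t3 : |σh * (B (n:ℝ) - B ((m:ℕ):ℝ))| ≤ |σh| * (4 * (b n : ℝ)) := by
      rw [abs_mul]
      exact mul_le_mul_of_nonneg_left hBinc (abs_nonneg _)
    rw [t2]
    exact add_le_add (add_le_add (add_le_add hA1 hA2) le_rfl) t3
  -- put it together
  have hterm : 2 * C * ((n:ℝ)^(2*α) * Real.log n) ≤ (b n : ℝ) := by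
    have h1 : (n:ℝ)^(2*α) * Real.log n ≤ (2*C+1)⁻¹ * (b n : ℝ) :=
      (div_le_iff₀ hbpos).mp hrat
    have h2 : 2*C*(2*C+1)⁻¹ ≤ 1 := by
      rw [← div_eq_mul_inv, div_le_one (by linarith)]; linarith
    nlinarith [mul_le_mul_of_nonneg_left h1 (by linarith : (0:ℝ) ≤ 2*C),
      mul_le_mul_of_nonneg_right h2 (le_of_lt hbpos)]
  have hKbn : K * 1 ≤ K * (b n : ℝ) := mul_le_mul_of_nonneg_left hbn hK0
  have hexp : (K + 1 + |L| + 4*|σh|) * (b n : ℝ)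
      = K * (b n : ℝ) + (b n : ℝ) + (b n : ℝ) * |L| + |σh| * (4 * (b n : ℝ)) := by
    ring
  rw [hexp]
  linarith [key, hterm, hKbn]
end
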